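/- Let N be a positive integer, α ≠ β be two model indices, and suppose for each model γ ∈ {α, β} and each input x the output is f_γ(x) = N^{-1/2} Σ_{i=1}^N c_i u_{γ i} φ(v_{γ i} h_{γ i}(x)), where (c_i), (v_{γ i}), and the random variables (h_{γ i}(x)) (the outputs of all preceding network layers) have an arbitrary joint distribution, φ: ℝ → ℝ is measurable, and the two families (u_{α i})_{i=1}^N and (u_{β i})_{i=1}^N consist of integrable random variables that are centered (E[u_{γ i}] = 0), mutually independent, and independent of all the other random variables (c, v, h and each other). Assume all appearing products are integrable. Then for all inputs x, x': E[f_α(x) · f_β(x')] = 0. -/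

import Mathlib

open MeasureTheory ProbabilityTheory

set_option maxHeartbeats 1000000

/-- **Finite-width independence of model outputs (Statement 4, Theorem 1 part 2).**
Two models `α ≠ β` have outputs `f_γ(x) = N^{-1/2} ∑ᵢ c_i u_{γ i} φ(v_{γ i} h_{γ i}(x))`,
where `(c_i)`, `(v_{γ i})` and the previous-layer outputs `(h_{γ i}(x))` have an arbitrary
joint distribution, and the last-layer post-activation modulation families `(u_{α i})` and
`(u_{β i})` are integrable, centered, mutually independent, and independent of everything
else. Then `E[f_α(x) f_β(x')] = 0` for all inputs `x, x'`. -/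
theorem centered_last_layer_modulations_decorrelate_models
    {Ω : Type*} [MeasurableSpace Ω] (P : Measure Ω) [IsProbabilityMeasure P]
    {X : Type*}  -- the space of inputs
    (N : ℕ) (hN : 0 < N)
    (c : Fin N → Ω → ℝ)                 -- last-layer shared weights
    (uα uβ : Fin N → Ω → ℝ)             -- post-activation modulations of the two models
    (vα vβ : Fin N → Ω → ℝ)             -- pre-activation modulations of the two models
    (hα hβ : Fin N → X → Ω → ℝ)         -- outputs of all preceding network layers
    (φ : ℝ → ℝ) (hφ : Measurable φ)
    (hcm : ∀ i, Measurable (c i))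
    (huαm : ∀ i, Measurable (uα i)) (huβm : ∀ i, Measurable (uβ i))
    (hvαm : ∀ i, Measurable (vα i)) (hvβm : ∀ i, Measurable (vβ i))
    (hhαm : ∀ i x, Measurable (hα i x)) (hhβm : ∀ i x, Measurable (hβ i x))
    -- the `u_{α i}` and `u_{β i}` are integrable and centered
    (huαint : ∀ i, Integrable (uα i) P) (huβint : ∀ i, Integrable (uβ i) P)
    (huα0 : ∀ i, ∫ ω, uα i ω ∂P = 0) (huβ0 : ∀ i, ∫ ω, uβ i ω ∂P = 0)
    -- the family `(u_{α i})`, the family `(u_{β i})` and all the other random variables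
    -- (`c`, `v`, `h`) form three mutually independent blocks
    (hindep : iIndep
      ![⨆ i, MeasurableSpace.comap (uα i) inferInstance,
        ⨆ i, MeasurableSpace.comap (uβ i) inferInstance,
        (⨆ i, MeasurableSpace.comap (c i) inferInstance) ⊔
        (⨆ i, MeasurableSpace.comap (vα i) inferInstance) ⊔
        (⨆ i, MeasurableSpace.comap (vβ i) inferInstance) ⊔
        (⨆ i, ⨆ x, MeasurableSpace.comap (hα i x) inferInstance) ⊔
        (⨆ i, ⨆ x, MeasurableSpace.comap (hβ i x) inferInstance)] P)
    -- all appearing products are integrable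
    (hint : ∀ (x x' : X) (i i' : Fin N),
      Integrable (fun ω =>
        c i ω * uα i ω * φ (vα i ω * hα i x ω)
          * (c i' ω * uβ i' ω * φ (vβ i' ω * hβ i' x' ω))) P)
    -- the model outputs
    (fα fβ : X → Ω → ℝ)
    (hfα : ∀ x ω, fα x ω = (1 / Real.sqrt N) * ∑ i, c i ω * uα i ω * φ (vα i ω * hα i x ω))
    (hfβ : ∀ x ω, fβ x ω = (1 / Real.sqrt N) * ∑ i, c i ω * uβ i ω * φ (vβ i ω * hβ i x ω)) :
    ∀ x x' : X, ∫ ω, fα x ω * fβ x' ω ∂P = 0 := by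
  intro x x'
  have h_le : ∀ j : Fin 3, (![(⨆ i, MeasurableSpace.comap (uα i) inferInstance), (⨆ i, MeasurableSpace.comap (uβ i) inferInstance), ((⨆ i, MeasurableSpace.comap (c i) inferInstance) ⊔
    (⨆ i, MeasurableSpace.comap (vα i) inferInstance) ⊔
    (⨆ i, MeasurableSpace.comap (vβ i) inferInstance) ⊔
    (⨆ i, ⨆ x, MeasurableSpace.comap (hα i x) inferInstance) ⊔
    (⨆ i, ⨆ x, MeasurableSpace.comap (hβ i x) inferInstance))] j) ≤ (inferInstance : MeasurableSpace Ω) := by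
    intro j
    fin_cases j <;>
      simp only [Matrix.cons_val_zero, Matrix.cons_val_one, Matrix.head_cons,
        Matrix.cons_val_two, Matrix.tail_cons]
    · exact iSup_le fun i => (huαm i).comap_le
    · exact iSup_le fun i => (huβm i).comap_le
    · refine sup_le (sup_le (sup_le (sup_le ?_ ?_) ?_) ?_) ?_
      · exact iSup_le fun i => (hcm i).comap_le
      · exact iSup_le fun i => (hvαm i).comap_le
      · exact iSup_le fun i => (hvβm i).comap_le
      · exact iSup_le fun i => iSup_le fun y => (hhαm i y).comap_le
      · exact iSup_le fun i => iSup_le fun y => (hhβm i y).comap_le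
  have hdisj : Disjoint ({0} : Set (Fin 3)) ({1, 2} : Set (Fin 3)) := by
    simp [Set.disjoint_left]
  have hindep2 : ProbabilityTheory.Indep
      (⨆ j ∈ ({0} : Set (Fin 3)), ![(⨆ i, MeasurableSpace.comap (uα i) inferInstance), (⨆ i, MeasurableSpace.comap (uβ i) inferInstance), ((⨆ i, MeasurableSpace.comap (c i) inferInstance) ⊔
    (⨆ i, MeasurableSpace.comap (vα i) inferInstance) ⊔
    (⨆ i, MeasurableSpace.comap (vβ i) inferInstance) ⊔
    (⨆ i, ⨆ x, MeasurableSpace.comap (hα i x) inferInstance) ⊔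
    (⨆ i, ⨆ x, MeasurableSpace.comap (hβ i x) inferInstance))] j)
      (⨆ j ∈ ({1, 2} : Set (Fin 3)), ![(⨆ i, MeasurableSpace.comap (uα i) inferInstance), (⨆ i, MeasurableSpace.comap (uβ i) inferInstance), ((⨆ i, MeasurableSpace.comap (c i) inferInstance) ⊔
    (⨆ i, MeasurableSpace.comap (vα i) inferInstance) ⊔
    (⨆ i, MeasurableSpace.comap (vβ i) inferInstance) ⊔
    (⨆ i, ⨆ x, MeasurableSpace.comap (hα i x) inferInstance) ⊔
    (⨆ i, ⨆ x, MeasurableSpace.comap (hβ i x) inferInstance))] j) P :=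
    ProbabilityTheory.indep_iSup_of_disjoint h_le hindep hdisj
  have hle0 : (⨆ i, MeasurableSpace.comap (uα i) inferInstance) ≤ ⨆ j ∈ ({0} : Set (Fin 3)), ![(⨆ i, MeasurableSpace.comap (uα i) inferInstance), (⨆ i, MeasurableSpace.comap (uβ i) inferInstance), ((⨆ i, MeasurableSpace.comap (c i) inferInstance) ⊔
    (⨆ i, MeasurableSpace.comap (vα i) inferInstance) ⊔
    (⨆ i, MeasurableSpace.comap (vβ i) inferInstance) ⊔
    (⨆ i, ⨆ x, MeasurableSpace.comap (hα i x) inferInstance) ⊔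
    (⨆ i, ⨆ x, MeasurableSpace.comap (hβ i x) inferInstance))] j := by
    have := le_biSup (f := fun j => ![(⨆ i, MeasurableSpace.comap (uα i) inferInstance), (⨆ i, MeasurableSpace.comap (uβ i) inferInstance), ((⨆ i, MeasurableSpace.comap (c i) inferInstance) ⊔
    (⨆ i, MeasurableSpace.comap (vα i) inferInstance) ⊔
    (⨆ i, MeasurableSpace.comap (vβ i) inferInstance) ⊔
    (⨆ i, ⨆ x, MeasurableSpace.comap (hα i x) inferInstance) ⊔
    (⨆ i, ⨆ x, MeasurableSpace.comap (hβ i x) inferInstance))] j)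
      (by simp : (0 : Fin 3) ∈ ({0} : Set (Fin 3)))
    simpa using this
  have hle1 : (⨆ i, MeasurableSpace.comap (uβ i) inferInstance) ≤ ⨆ j ∈ ({1, 2} : Set (Fin 3)), ![(⨆ i, MeasurableSpace.comap (uα i) inferInstance), (⨆ i, MeasurableSpace.comap (uβ i) inferInstance), ((⨆ i, MeasurableSpace.comap (c i) inferInstance) ⊔
    (⨆ i, MeasurableSpace.comap (vα i) inferInstance) ⊔
    (⨆ i, MeasurableSpace.comap (vβ i) inferInstance) ⊔
    (⨆ i, ⨆ x, MeasurableSpace.comap (hα i x) inferInstance) ⊔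
    (⨆ i, ⨆ x, MeasurableSpace.comap (hβ i x) inferInstance))] j := by
    have := le_biSup (f := fun j => ![(⨆ i, MeasurableSpace.comap (uα i) inferInstance), (⨆ i, MeasurableSpace.comap (uβ i) inferInstance), ((⨆ i, MeasurableSpace.comap (c i) inferInstance) ⊔
    (⨆ i, MeasurableSpace.comap (vα i) inferInstance) ⊔
    (⨆ i, MeasurableSpace.comap (vβ i) inferInstance) ⊔
    (⨆ i, ⨆ x, MeasurableSpace.comap (hα i x) inferInstance) ⊔
    (⨆ i, ⨆ x, MeasurableSpace.comap (hβ i x) inferInstance))] j)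
      (by simp : (1 : Fin 3) ∈ ({1, 2} : Set (Fin 3)))
    simpa using this
  have hle2 : ((⨆ i, MeasurableSpace.comap (c i) inferInstance) ⊔
    (⨆ i, MeasurableSpace.comap (vα i) inferInstance) ⊔
    (⨆ i, MeasurableSpace.comap (vβ i) inferInstance) ⊔
    (⨆ i, ⨆ x, MeasurableSpace.comap (hα i x) inferInstance) ⊔
    (⨆ i, ⨆ x, MeasurableSpace.comap (hβ i x) inferInstance)) ≤ ⨆ j ∈ ({1, 2} : Set (Fin 3)), ![(⨆ i, MeasurableSpace.comap (uα i) inferInstance), (⨆ i, MeasurableSpace.comap (uβ i) inferInstance), ((⨆ i, MeasurableSpace.comap (c i) inferInstance) ⊔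
    (⨆ i, MeasurableSpace.comap (vα i) inferInstance) ⊔
    (⨆ i, MeasurableSpace.comap (vβ i) inferInstance) ⊔
    (⨆ i, ⨆ x, MeasurableSpace.comap (hα i x) inferInstance) ⊔
    (⨆ i, ⨆ x, MeasurableSpace.comap (hβ i x) inferInstance))] j := by
    have := le_biSup (f := fun j => ![(⨆ i, MeasurableSpace.comap (uα i) inferInstance), (⨆ i, MeasurableSpace.comap (uβ i) inferInstance), ((⨆ i, MeasurableSpace.comap (c i) inferInstance) ⊔
    (⨆ i, MeasurableSpace.comap (vα i) inferInstance) ⊔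
    (⨆ i, MeasurableSpace.comap (vβ i) inferInstance) ⊔
    (⨆ i, ⨆ x, MeasurableSpace.comap (hα i x) inferInstance) ⊔
    (⨆ i, ⨆ x, MeasurableSpace.comap (hβ i x) inferInstance))] j)
      (by simp : (2 : Fin 3) ∈ ({1, 2} : Set (Fin 3)))
    simpa using this
  have hcM : ∀ i, Measurable[((⨆ i, MeasurableSpace.comap (c i) inferInstance) ⊔
    (⨆ i, MeasurableSpace.comap (vα i) inferInstance) ⊔
    (⨆ i, MeasurableSpace.comap (vβ i) inferInstance) ⊔
    (⨆ i, ⨆ x, MeasurableSpace.comap (hα i x) inferInstance) ⊔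
    (⨆ i, ⨆ x, MeasurableSpace.comap (hβ i x) inferInstance))] (c i) := fun i =>
    measurable_iff_comap_le.2
      ((le_iSup (fun i => MeasurableSpace.comap (c i) inferInstance) i).trans
        (le_sup_of_le_left (le_sup_of_le_left (le_sup_of_le_left le_sup_left))))
  have hvαM : ∀ i, Measurable[((⨆ i, MeasurableSpace.comap (c i) inferInstance) ⊔
    (⨆ i, MeasurableSpace.comap (vα i) inferInstance) ⊔
    (⨆ i, MeasurableSpace.comap (vβ i) inferInstance) ⊔
    (⨆ i, ⨆ x, MeasurableSpace.comap (hα i x) inferInstance) ⊔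
    (⨆ i, ⨆ x, MeasurableSpace.comap (hβ i x) inferInstance))] (vα i) := fun i =>
    measurable_iff_comap_le.2
      ((le_iSup (fun i => MeasurableSpace.comap (vα i) inferInstance) i).trans
        (le_sup_of_le_left (le_sup_of_le_left (le_sup_of_le_left le_sup_right))))
  have hvβM : ∀ i, Measurable[((⨆ i, MeasurableSpace.comap (c i) inferInstance) ⊔
    (⨆ i, MeasurableSpace.comap (vα i) inferInstance) ⊔
    (⨆ i, MeasurableSpace.comap (vβ i) inferInstance) ⊔
    (⨆ i, ⨆ x, MeasurableSpace.comap (hα i x) inferInstance) ⊔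
    (⨆ i, ⨆ x, MeasurableSpace.comap (hβ i x) inferInstance))] (vβ i) := fun i =>
    measurable_iff_comap_le.2
      ((le_iSup (fun i => MeasurableSpace.comap (vβ i) inferInstance) i).trans
        (le_sup_of_le_left (le_sup_of_le_left le_sup_right)))
  have hhαM : ∀ i y, Measurable[((⨆ i, MeasurableSpace.comap (c i) inferInstance) ⊔
    (⨆ i, MeasurableSpace.comap (vα i) inferInstance) ⊔
    (⨆ i, MeasurableSpace.comap (vβ i) inferInstance) ⊔
    (⨆ i, ⨆ x, MeasurableSpace.comap (hα i x) inferInstance) ⊔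
    (⨆ i, ⨆ x, MeasurableSpace.comap (hβ i x) inferInstance))] (hα i y) := fun i y =>
    measurable_iff_comap_le.2 (le_trans
      (le_trans (le_iSup (fun z => MeasurableSpace.comap (hα i z) inferInstance) y)
        (le_iSup (fun i => ⨆ z, MeasurableSpace.comap (hα i z) inferInstance) i))
      (le_sup_of_le_left le_sup_right))
  have hhβM : ∀ i y, Measurable[((⨆ i, MeasurableSpace.comap (c i) inferInstance) ⊔
    (⨆ i, MeasurableSpace.comap (vα i) inferInstance) ⊔
    (⨆ i, MeasurableSpace.comap (vβ i) inferInstance) ⊔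
    (⨆ i, ⨆ x, MeasurableSpace.comap (hα i x) inferInstance) ⊔
    (⨆ i, ⨆ x, MeasurableSpace.comap (hβ i x) inferInstance))] (hβ i y) := fun i y =>
    measurable_iff_comap_le.2 (le_trans
      (le_trans (le_iSup (fun z => MeasurableSpace.comap (hβ i z) inferInstance) y)
        (le_iSup (fun i => ⨆ z, MeasurableSpace.comap (hβ i z) inferInstance) i))
      le_sup_right)
  have huβM : ∀ i, Measurable[(⨆ i, MeasurableSpace.comap (uβ i) inferInstance)] (uβ i) := fun i =>
    measurable_iff_comap_le.2 (le_iSup (fun i => MeasurableSpace.comap (uβ i) inferInstance) i)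
  -- the key term computation
  have key : ∀ i i' : Fin N,
      ∫ ω, c i ω * uα i ω * φ (vα i ω * hα i x ω)
          * (c i' ω * uβ i' ω * φ (vβ i' ω * hβ i' x' ω)) ∂P = 0 := by
    intro i i'
    set B : Ω → ℝ := fun ω =>
      c i ω * φ (vα i ω * hα i x ω) * (c i' ω * uβ i' ω * φ (vβ i' ω * hβ i' x' ω)) with hB
    have hBM : Measurable[(⨆ i, MeasurableSpace.comap (uβ i) inferInstance) ⊔ ((⨆ i, MeasurableSpace.comap (c i) inferInstance) ⊔
    (⨆ i, MeasurableSpace.comap (vα i) inferInstance) ⊔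
    (⨆ i, MeasurableSpace.comap (vβ i) inferInstance) ⊔
    (⨆ i, ⨆ x, MeasurableSpace.comap (hα i x) inferInstance) ⊔
    (⨆ i, ⨆ x, MeasurableSpace.comap (hβ i x) inferInstance))] B := by
      have h12 : ((⨆ i, MeasurableSpace.comap (c i) inferInstance) ⊔
    (⨆ i, MeasurableSpace.comap (vα i) inferInstance) ⊔
    (⨆ i, MeasurableSpace.comap (vβ i) inferInstance) ⊔
    (⨆ i, ⨆ x, MeasurableSpace.comap (hα i x) inferInstance) ⊔
    (⨆ i, ⨆ x, MeasurableSpace.comap (hβ i x) inferInstance)) ≤ (⨆ i, MeasurableSpace.comap (uβ i) inferInstance) ⊔ ((⨆ i, MeasurableSpace.comap (c i) inferInstance) ⊔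
    (⨆ i, MeasurableSpace.comap (vα i) inferInstance) ⊔
    (⨆ i, MeasurableSpace.comap (vβ i) inferInstance) ⊔
    (⨆ i, ⨆ x, MeasurableSpace.comap (hα i x) inferInstance) ⊔
    (⨆ i, ⨆ x, MeasurableSpace.comap (hβ i x) inferInstance)) := le_sup_right
      have h1 : (⨆ i, MeasurableSpace.comap (uβ i) inferInstance) ≤ (⨆ i, MeasurableSpace.comap (uβ i) inferInstance) ⊔ ((⨆ i, MeasurableSpace.comap (c i) inferInstance) ⊔
    (⨆ i, MeasurableSpace.comap (vα i) inferInstance) ⊔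
    (⨆ i, MeasurableSpace.comap (vβ i) inferInstance) ⊔
    (⨆ i, ⨆ x, MeasurableSpace.comap (hα i x) inferInstance) ⊔
    (⨆ i, ⨆ x, MeasurableSpace.comap (hβ i x) inferInstance)) := le_sup_left
      exact (((hcM i).mono h12 le_rfl).mul
          (hφ.comp (((hvαM i).mono h12 le_rfl).mul ((hhαM i x).mono h12 le_rfl)))).mul
        ((((hcM i').mono h12 le_rfl).mul ((huβM i').mono h1 le_rfl)).mul
          (hφ.comp (((hvβM i').mono h12 le_rfl).mul ((hhβM i' x').mono h12 le_rfl))))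
    have hIndepF : IndepFun (uα i) B P := by
      have h0 : MeasurableSpace.comap (uα i) inferInstance ≤ (⨆ i, MeasurableSpace.comap (uα i) inferInstance) :=
        le_iSup (fun i => MeasurableSpace.comap (uα i) inferInstance) i
      have hBle : MeasurableSpace.comap B inferInstance ≤ (⨆ i, MeasurableSpace.comap (uβ i) inferInstance) ⊔ ((⨆ i, MeasurableSpace.comap (c i) inferInstance) ⊔
    (⨆ i, MeasurableSpace.comap (vα i) inferInstance) ⊔
    (⨆ i, MeasurableSpace.comap (vβ i) inferInstance) ⊔
    (⨆ i, ⨆ x, MeasurableSpace.comap (hα i x) inferInstance) ⊔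
    (⨆ i, ⨆ x, MeasurableSpace.comap (hβ i x) inferInstance)) :=
        measurable_iff_comap_le.1 hBM
      exact ProbabilityTheory.indep_of_indep_of_le_left
        (ProbabilityTheory.indep_of_indep_of_le_right hindep2 (hBle.trans (sup_le hle1 hle2)))
        (h0.trans hle0)
    have hBmeas : Measurable B := hBM.mono (sup_le (h_le 1) (h_le 2)) le_rfl
    have hmul : ∫ ω, uα i ω * B ω ∂P = (∫ ω, uα i ω ∂P) * ∫ ω, B ω ∂P :=
      hIndepF.integral_mul_eq_mul_integral (huαm i).aestronglyMeasurable hBmeas.aestronglyMeasurable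
    have heq : ∫ ω, c i ω * uα i ω * φ (vα i ω * hα i x ω)
          * (c i' ω * uβ i' ω * φ (vβ i' ω * hβ i' x' ω)) ∂P = ∫ ω, uα i ω * B ω ∂P := by
      congr 1; funext ω; simp only [hB]; ring
    rw [heq, hmul, huα0 i, zero_mul]
  have hexp : ∀ ω, fα x ω * fβ x' ω =
      (1 / Real.sqrt N) * (1 / Real.sqrt N) *
        ∑ i, ∑ i', c i ω * uα i ω * φ (vα i ω * hα i x ω)
          * (c i' ω * uβ i' ω * φ (vβ i' ω * hβ i' x' ω)) := by
    intro ω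
    rw [hfα, hfβ, mul_mul_mul_comm, Finset.sum_mul_sum]
  calc ∫ ω, fα x ω * fβ x' ω ∂P
      = (1 / Real.sqrt N) * (1 / Real.sqrt N) *
          ∫ ω, ∑ i, ∑ i', c i ω * uα i ω * φ (vα i ω * hα i x ω)
            * (c i' ω * uβ i' ω * φ (vβ i' ω * hβ i' x' ω)) ∂P := by
        rw [← integral_const_mul]
        exact integral_congr_ae (Filter.Eventually.of_forall fun ω => hexp ω)
    _ = 0 := by
        rw [integral_finset_sum _ fun i _ =>
          integrable_finset_sum _ fun i' _ => hint x x' i i']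
        have hz : ∀ i ∈ Finset.univ, (∫ ω, ∑ i', c i ω * uα i ω * φ (vα i ω * hα i x ω)
            * (c i' ω * uβ i' ω * φ (vβ i' ω * hβ i' x' ω)) ∂P) = 0 := by
          intro i _
          rw [integral_finset_sum _ fun i' _ => hint x x' i i']
          exact Finset.sum_eq_zero fun i' _ => key i i'
        rw [Finset.sum_congr rfl hz]
        simp
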